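/- Let G be a strongly connected digraph with at least three vertices and no strong articulation point (i.e., G is 2-vertex-connected). Then for every pair of distinct vertices u, v there exist two internally vertex-disjoint directed paths from u to v. -/

import Mathlib

variable {V : Type*}

/-- Reachability by a directed path staying inside the vertex set `C`. -/
def ReachIn (E : Set (V × V)) (C : Set V) (a b : V) : Prop :=
  Relation.ReflTransGen (fun p q => p ∈ C ∧ q ∈ C ∧ (p, q) ∈ E) a b

/-- `l` is a directed path from `a` to `b` in the digraph `E`. -/
def IsPath (E : Set (V × V)) (a b : V) (l : List V) : Prop :=
  l.head? = some a ∧ l.getLast? = some b ∧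
    List.Chain' (fun p q => (p, q) ∈ E) l

namespace Stmt19Aux

variable {E : Set (V × V)}

lemma ne_nil {a b : V} {l : List V} (h : IsPath E a b l) : l ≠ [] := by
  rintro rfl; simp [IsPath] at h

lemma head_mem {a b : V} {l : List V} (h : IsPath E a b l) : a ∈ l :=
  List.mem_of_mem_head? (by rw [h.1]; rfl)

lemma last_mem {a b : V} {l : List V} (h : IsPath E a b l) : b ∈ l :=
  List.mem_of_mem_getLast? (by rw [h.2.1]; rfl)

lemma singleton_path (a : V) : IsPath E a a [a] := ⟨rfl, rfl, List.isChain_singleton a⟩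

/-- A `ReachIn` gives a path list whose vertices are in `C` (given `a ∈ C`). -/
lemma reach_path {C : Set V} {a b : V} (h : ReachIn E C a b) (ha : a ∈ C) :
    ∃ l, IsPath E a b l ∧ ∀ x ∈ l, x ∈ C := by
  induction h with
  | refl => exact ⟨[a], singleton_path a, by simpa⟩
  | @tail b' c' _ hbc ih =>
    obtain ⟨l, hl, hmem⟩ := ih
    refine ⟨l ++ [c'], ⟨?_, ?_, ?_⟩, ?_⟩
    · rw [List.head?_append, hl.1]; rfl
    · rw [List.getLast?_append_of_ne_nil _ (by simp)]; rfl
    · refine List.isChain_append.2 ⟨hl.2.2, List.isChain_singleton _, ?_⟩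
      intro x hx y hy
      simp only [List.head?_cons, Option.mem_def, Option.some.injEq] at hy
      rw [hl.2.1] at hx
      simp only [Option.mem_def, Option.some.injEq] at hx
      subst hx; subst hy; exact hbc.2.2
    · intro x hx
      rcases List.mem_append.1 hx with h1 | h1
      · exact hmem x h1
      · simp only [List.mem_singleton] at h1; subst h1; exact hbc.2.1

/-- Glue a path `a → b` with a path `b → c`. -/
lemma glue {a b c : V} {l₁ l₂ : List V} (h₁ : IsPath E a b l₁) (h₂ : IsPath E b c l₂) :
    IsPath E a c (l₁ ++ l₂.tail) := by
  obtain ⟨x, t, rfl⟩ : ∃ x t, l₂ = x :: t := by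
    cases l₂ with
    | nil => exact absurd rfl (ne_nil h₂)
    | cons x t => exact ⟨x, t, rfl⟩
  have hx : x = b := by simpa [IsPath] using h₂.1
  rw [hx] at h₂
  clear hx
  refine ⟨?_, ?_, ?_⟩
  · rw [List.head?_append, h₁.1]; rfl
  · cases t with
    | nil =>
      have : c = b := by simpa using h₂.2.1.symm
      subst this; simpa using h₁.2.1
    | cons y t' =>
      rw [List.tail_cons, List.getLast?_append_of_ne_nil _ (by simp)]
      simpa using h₂.2.1
  · refine List.isChain_append.2 ⟨h₁.2.2, h₂.2.2.tail, ?_⟩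
    intro p hp q hq
    rw [h₁.2.1] at hp
    simp only [Option.mem_def, Option.some.injEq] at hp
    subst hp
    exact (List.isChain_cons.1 h₂.2.2).1 q hq

/-- Split a path at an interior point. -/
lemma split {a b z : V} {s t : List V} (h : IsPath E a b (s ++ z :: t)) :
    IsPath E a z (s ++ [z]) ∧ IsPath E z b (z :: t) := by
  constructor
  · refine ⟨?_, ?_, ?_⟩
    · rw [List.head?_append]
      have := h.1
      rw [List.head?_append] at this
      cases s with
      | nil => simpa using this
      | cons y s' => simpa using this
    · rw [List.getLast?_append_of_ne_nil _ (by simp)]; rfl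
    · exact h.2.2.prefix ⟨t, by simp⟩
  · refine ⟨rfl, ?_, h.2.2.suffix ⟨s, rfl⟩⟩
    rw [← h.2.1, List.getLast?_append_of_ne_nil _ (by simp)]

/-- From `[x, x] <+ l` extract a split with a later occurrence. -/
lemma dup_split {x : V} : ∀ {l : List V}, List.Sublist [x, x] l → ∃ s t, l = s ++ x :: t ∧ x ∈ t := by
  intro l h
  induction l with
  | nil => simp at h
  | cons y l ih =>
    rcases h with _ | _
    case cons h' =>
      obtain ⟨s, t, rfl, hx⟩ := ih h'
      exact ⟨y :: s, t, rfl, hx⟩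
    case cons.cons_cons h' =>
      exact ⟨[], l, rfl, List.singleton_sublist.1 h'⟩

/-- Every path contains a simple path with the same endpoints. -/
lemma simplify : ∀ (n : ℕ) {l : List V} {a b : V}, l.length ≤ n → IsPath E a b l →
    ∃ l', IsPath E a b l' ∧ l'.Nodup ∧ ∀ x ∈ l', x ∈ l := by
  intro n
  induction n with
  | zero => intro l a b hn h; exact absurd (List.length_eq_zero_iff.1 (Nat.le_zero.1 hn)) (ne_nil h)
  | succ n ih =>
    intro l a b hn h
    by_cases hd : l.Nodup
    · exact ⟨l, h, hd, fun _ hx => hx⟩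
    · obtain ⟨x, hx⟩ := List.exists_duplicate_iff_not_nodup.2 hd
      obtain ⟨s, t, rfl, hxt⟩ := dup_split (List.duplicate_iff_sublist.1 hx)
      obtain ⟨m, r, rfl⟩ := List.append_of_mem hxt
      -- l = s ++ x :: (m ++ x :: r); new list : s ++ [x] ++ r = (s ++ [x]) ++ (x::r).tail
      have h1 := (split h).1  -- IsPath a x (s ++ [x])
      have h2 := (split h).2  -- IsPath x b (x :: (m ++ x :: r))
      have h2' : IsPath E x b ((x :: m) ++ x :: r) := by simpa using h2
      have h3 := (split h2').2  -- IsPath x b (x :: r)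
      have hglue := glue h1 h3  -- IsPath a b (s ++ [x] ++ r)
      have hlen : (s ++ [x] ++ r).length ≤ n := by
        simp only [List.length_append, List.length_cons, List.length_singleton,
          List.length_nil] at hn ⊢
        omega
      obtain ⟨l', hl', hnd, hsub⟩ := ih hlen hglue
      refine ⟨l', hl', hnd, fun y hy => ?_⟩
      have := hsub y hy
      simp only [List.mem_append, List.mem_cons, List.mem_singleton] at this ⊢
      tauto

/-- Split off the last element of `l` satisfying `p`. -/
lemma last_split (p : V → Prop) : ∀ {l : List V}, (∃ x ∈ l, p x) →
    ∃ s z t, l = s ++ z :: t ∧ p z ∧ ∀ x ∈ t, ¬ p x := by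
  intro l
  induction l using List.reverseRecOn with
  | nil => simp
  | append_singleton l y ih =>
    intro h
    by_cases hy : p y
    · exact ⟨l, y, [], rfl, hy, by simp⟩
    · obtain ⟨x, hx, hpx⟩ := h
      have hxl : x ∈ l := by
        rcases List.mem_append.1 hx with h1 | h1
        · exact h1
        · simp only [List.mem_singleton] at h1; subst h1; exact absurd hpx hy
      obtain ⟨s, z, t, rfl, hz, ht⟩ := ih ⟨x, hxl, hpx⟩
      refine ⟨s, z, t ++ [y], by simp, hz, fun a ha => ?_⟩
      rcases List.mem_append.1 ha with h1 | h1
      · exact ht a h1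
      · simp only [List.mem_singleton] at h1; subst h1; exact hy

/-- The key rerouting construction. -/
lemma reroute {u v w z : V} {P₁ P₂ T : List V}
    (hP₁ : IsPath E u w P₁) (hP₂ : IsPath E u w P₂)
    (hN₁ : P₁.Nodup) (hN₂ : P₂.Nodup)
    (hdisj : ∀ a ∈ P₁, a ∈ P₂ → a = u ∨ a = w)
    (hT : IsPath E z v T) (hTN : T.Nodup)
    (hz : z ∈ P₁)
    (hTS : ∀ x ∈ T, x ≠ z → x ∉ P₁ ∧ x ∉ P₂)
    (hwT : w ∉ T) (hvP₂ : v ∉ P₂)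
    (hwv : (w, v) ∈ E) :
    ∃ l₁ l₂ : List V, IsPath E u v l₁ ∧ IsPath E u v l₂ ∧ l₁.Nodup ∧ l₂.Nodup ∧
      ∀ x : V, x ∈ l₁ → x ∈ l₂ → x = u ∨ x = v := by
  obtain ⟨s₁, t₁, rfl⟩ := List.append_of_mem hz
  obtain ⟨t, rfl⟩ : ∃ t, T = z :: t := by
    cases T with
    | nil => exact absurd rfl (ne_nil hT)
    | cons x t =>
      have : x = z := by simpa [IsPath] using hT.1
      exact ⟨t, by rw [this]⟩
  have hsplit := split hP₁
  have hl₁ : IsPath E u v ((s₁ ++ [z]) ++ (z :: t).tail) := glue hsplit.1 hT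
  have hl₁' : IsPath E u v (s₁ ++ z :: t) := by simpa using hl₁
  have hP₂ne : P₂ ≠ [] := ne_nil hP₂
  have hl₂ : IsPath E u v (P₂ ++ [v]) := by
    refine ⟨?_, ?_, ?_⟩
    · rw [List.head?_append, hP₂.1]; rfl
    · rw [List.getLast?_append_of_ne_nil _ (by simp)]; rfl
    · refine List.isChain_append.2 ⟨hP₂.2.2, List.isChain_singleton _, ?_⟩
      intro p hp q hq
      rw [hP₂.2.1] at hp
      simp only [Option.mem_def, Option.some.injEq, List.head?_cons] at hp hq
      subst hp; subst hq; exact hwv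
  -- facts about P₁'s structure
  rw [List.nodup_append] at hN₁
  obtain ⟨hs₁N, hztN, hs₁disj⟩ := hN₁
  have hwzt : w ∈ z :: t₁ := by
    have := hP₁.2.1
    rw [List.getLast?_append_of_ne_nil _ (by simp)] at this
    exact List.mem_of_mem_getLast? (by rw [this]; rfl)
  have hws₁ : w ∉ s₁ := fun hw => hs₁disj w hw w hwzt rfl
  have hwz : w ≠ z := by rintro rfl; exact hwT (by simp)
  have hzt : z ∉ t := by
    rw [List.nodup_cons] at hTN; exact hTN.1
  -- Nodup of l₁
  have hN₁' : (s₁ ++ z :: t).Nodup := by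
    rw [List.nodup_append]
    refine ⟨hs₁N, hTN, fun a ha b hb hab => ?_⟩
    subst hab
    rcases List.mem_cons.1 hb with rfl | hb'
    · exact hs₁disj _ ha _ (by simp) rfl
    · have : a ≠ z := fun h => hzt (h ▸ hb')
      exact (hTS a (by simp [hb']) this).1 (by simp [ha])
  have hN₂' : (P₂ ++ [v]).Nodup := by
    rw [List.nodup_append]
    exact ⟨hN₂, by simp, fun a ha b hb hab => by
      simp only [List.mem_singleton] at hb; subst hb; subst hab; exact hvP₂ ha⟩
  refine ⟨s₁ ++ z :: t, P₂ ++ [v], hl₁', hl₂, hN₁', hN₂', ?_⟩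
  intro x hx₁ hx₂
  rcases List.mem_append.1 hx₂ with hxP₂ | hxv
  swap
  · simp only [List.mem_singleton] at hxv; exact Or.inr hxv
  -- x ∈ P₂
  rcases List.mem_append.1 hx₁ with hxs | hxzt
  · -- x ∈ s₁ ⊆ P₁
    rcases hdisj x (by simp [hxs]) hxP₂ with h | h
    · exact Or.inl h
    · exact absurd hxs (h ▸ hws₁)
  · rcases List.mem_cons.1 hxzt with rfl | hxt
    · -- x = z ∈ P₁
      rcases hdisj x (by simp) hxP₂ with h | h
      · exact Or.inl h
      · exact absurd h.symm hwz
    · -- x ∈ t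
      have : x ≠ z := fun h => hzt (h ▸ hxt)
      exact absurd hxP₂ (hTS x (by simp [hxt]) this).2

/-- Base case: there is an edge `u → v`. -/
lemma base (hsc : ∀ a b : V, ReachIn E Set.univ a b) {u v : V} (huv : u ≠ v)
    (he : (u, v) ∈ E) :
    ∃ l₁ l₂ : List V, IsPath E u v l₁ ∧ IsPath E u v l₂ ∧ l₁.Nodup ∧ l₂.Nodup ∧
      ∀ x : V, x ∈ l₁ → x ∈ l₂ → x = u ∨ x = v := by
  obtain ⟨l, hl, _⟩ := reach_path (hsc u v) (Set.mem_univ u)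
  obtain ⟨l', hl', hnd, _⟩ := simplify l.length le_rfl hl
  refine ⟨[u, v], l', ⟨rfl, rfl, List.isChain_pair.2 he⟩, hl', by simp [huv], hnd, ?_⟩
  intro x hx _
  simpa using hx

lemma main (hsc : ∀ a b : V, ReachIn E Set.univ a b)
    (hart : ∀ x a b : V, a ≠ x → b ≠ x → ReachIn E ({x}ᶜ : Set V) a b) :
    ∀ (n : ℕ) (u v : V) (l : List V), u ≠ v → IsPath E u v l → l.length ≤ n →
    ∃ l₁ l₂ : List V, IsPath E u v l₁ ∧ IsPath E u v l₂ ∧ l₁.Nodup ∧ l₂.Nodup ∧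
      ∀ x : V, x ∈ l₁ → x ∈ l₂ → x = u ∨ x = v := by
  intro n
  induction n with
  | zero =>
    intro u v l huv hl hlen
    exact absurd (List.length_eq_zero_iff.1 (Nat.le_zero.1 hlen)) (ne_nil hl)
  | succ n ih =>
    intro u v l huv hl hlen
    have hlne : l ≠ [] := ne_nil hl
    obtain ⟨l', rfl⟩ : ∃ l', l = l' ++ [v] := by
      refine ⟨l.dropLast, ?_⟩
      have h1 := List.dropLast_append_getLast hlne
      have h2 : l.getLast hlne = v := by
        have := hl.2.1
        rw [List.getLast?_eq_getLast hlne] at this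
        simpa using this
      rw [← h2]; exact h1.symm
    by_cases hl'nil : l' = []
    · subst hl'nil
      have : v = u := by simpa [IsPath] using hl.1
      exact absurd this.symm huv
    obtain ⟨w, hw⟩ : ∃ w, l'.getLast? = some w := by
      cases hlg : l'.getLast? with
      | none => exact absurd (List.getLast?_eq_none_iff.1 hlg) hl'nil
      | some w => exact ⟨w, rfl⟩
    have hchain := List.isChain_append.1 hl.2.2
    have hwv : (w, v) ∈ E := hchain.2.2 w (by rw [hw]; rfl) v rfl
    have hl'path : IsPath E u w l' := by
      refine ⟨?_, hw, hchain.1⟩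
      have := hl.1
      rw [List.head?_append] at this
      cases l' with
      | nil => exact absurd rfl hl'nil
      | cons y s => simpa using this
    have hl'len : l'.length ≤ n := by
      simp only [List.length_append, List.length_singleton] at hlen; omega
    by_cases hwu : w = u
    · exact base hsc huv (hwu ▸ hwv)
    by_cases hwv' : w = v
    · exact ih u v l' huv (hwv' ▸ hl'path) hl'len
    -- now w ≠ u, w ≠ v
    obtain ⟨P₁, P₂, hP₁, hP₂, hN₁, hN₂, hdisj⟩ :=
      ih u w l' (fun h => hwu h.symm) hl'path hl'len
    by_cases hv1 : v ∈ P₁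
    · have hvP₂ : v ∉ P₂ := fun hv2 => by
        rcases hdisj v hv1 hv2 with h | h
        · exact huv h.symm
        · exact hwv' h.symm
      exact reroute hP₁ hP₂ hN₁ hN₂ hdisj (singleton_path v) (by simp) hv1
        (fun x hx hxz => absurd (by simpa using hx) hxz)
        (by simpa using hwv') hvP₂ hwv
    by_cases hv2 : v ∈ P₂
    · have hdisj' : ∀ a ∈ P₂, a ∈ P₁ → a = u ∨ a = w := fun a h2 h1 => hdisj a h1 h2
      exact reroute hP₂ hP₁ hN₂ hN₁ hdisj' (singleton_path v) (by simp) hv2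
        (fun x hx hxz => absurd (by simpa using hx) hxz)
        (by simpa using hwv') hv1 hwv
    · -- v ∉ P₁ ∪ P₂ : use the path avoiding w
      obtain ⟨R₀, hR₀, hR₀w⟩ := reach_path (hart w u v (fun h => hwu h.symm) (fun h => hwv' h.symm))
        (Set.mem_compl_singleton_iff.2 (fun h => hwu h.symm))
      obtain ⟨R, hR, hRN, hRsub⟩ := simplify R₀.length le_rfl hR₀
      have hRw : ∀ x ∈ R, x ≠ w := fun x hx h =>
        (hR₀w x (hRsub x hx)) (by simpa using h)
      obtain ⟨s, z, t, hReq, hzS, htS⟩ := last_split (fun x => x ∈ P₁ ∨ x ∈ P₂)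
        ⟨u, head_mem hR, Or.inl (head_mem hP₁)⟩
      rw [hReq] at hR hRN hRw
      have hT : IsPath E z v (z :: t) := (split hR).2
      have hTN : (z :: t).Nodup := hRN.sublist (List.sublist_append_right s (z :: t))
      have hTS : ∀ x ∈ z :: t, x ≠ z → x ∉ P₁ ∧ x ∉ P₂ := by
        intro x hx hxz
        rcases List.mem_cons.1 hx with rfl | hxt
        · exact absurd rfl hxz
        · have := htS x hxt
          exact ⟨fun h => this (Or.inl h), fun h => this (Or.inr h)⟩
      have hwT : w ∉ z :: t := fun h => hRw w (by simp [h]) rfl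
      rcases hzS with hz1 | hz2
      · exact reroute hP₁ hP₂ hN₁ hN₂ hdisj hT hTN hz1 hTS hwT hv2 hwv
      · have hdisj' : ∀ a ∈ P₂, a ∈ P₁ → a = u ∨ a = w := fun a h2 h1 => hdisj a h1 h2
        have hTS' : ∀ x ∈ z :: t, x ≠ z → x ∉ P₂ ∧ x ∉ P₁ :=
          fun x hx h => ⟨(hTS x hx h).2, (hTS x hx h).1⟩
        exact reroute hP₂ hP₁ hN₂ hN₁ hdisj' hT hTN hz2 hTS' hwT hv1 hwv

end Stmt19Aux

theorem stmt19 [Fintype V] (E : Set (V × V))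
    -- G has at least three vertices
    (hcard : ∃ a b c : V, a ≠ b ∧ a ≠ c ∧ b ≠ c)
    -- G is strongly connected
    (hsc : ∀ a b : V, ReachIn E Set.univ a b)
    -- G has no strong articulation point: removing any vertex leaves it strongly connected
    (hart : ∀ x : V, ∀ a b : V, a ≠ x → b ≠ x →
      ReachIn E ({x}ᶜ : Set V) a b) :
    ∀ u v : V, u ≠ v →
      ∃ l₁ l₂ : List V, IsPath E u v l₁ ∧ IsPath E u v l₂ ∧
        ∀ w : V, w ∈ l₁ → w ∈ l₂ → w = u ∨ w = v := by
  intro u v huv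
  obtain ⟨l, hl, _⟩ := Stmt19Aux.reach_path (hsc u v) (Set.mem_univ u)
  obtain ⟨l₁, l₂, h₁, h₂, _, _, hd⟩ := Stmt19Aux.main hsc hart l.length u v l huv hl le_rfl
  exact ⟨l₁, l₂, h₁, h₂, hd⟩
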